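/- Let t₁ ≥ t₂ ≥ ... ≥ t_{2M} be nonnegative reals. Among all partitions of {1,...,2M} into M unordered pairs, the partition {(1,2M), (2,2M−1), ..., (M,M+1)} maximizes the minimum over pairs (i,j) of log₂(1 + t_i + t_j). -/

import Mathlib

lemma card_filter_val_lt (n a : ℕ) (h : a ≤ n) :
    (Finset.univ.filter (fun x : Fin n => x.val < a)).card = a := by
  have : (Finset.univ.filter (fun x : Fin n => x.val < a))
      = Finset.univ.map (Fin.castLEEmb h) := by
    ext x
    simp only [Finset.mem_filter, Finset.mem_univ, true_and, Finset.mem_map,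
      Fin.castLEEmb_apply]
    constructor
    · intro hx
      exact ⟨⟨x.val, hx⟩, by ext; simp⟩
    · rintro ⟨y, rfl⟩
      simpa using y.isLt.trans_le h
  simp [this]

lemma key_pair (M : ℕ) (hM : 0 < M) (σ : Equiv.Perm (Fin (2 * M)))
    (k0 : ℕ) (hk0 : k0 < M) :
    ∃ m : Fin M,
      (k0 ≤ (σ ⟨m, by have := m.isLt; omega⟩).val ∧
        2 * M - 1 - k0 ≤ (σ ⟨2 * M - 1 - m, by have := m.isLt; omega⟩).val) ∨
      (k0 ≤ (σ ⟨2 * M - 1 - m, by have := m.isLt; omega⟩).val ∧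
        2 * M - 1 - k0 ≤ (σ ⟨m, by have := m.isLt; omega⟩).val) := by
  by_contra h
  push_neg at h
  -- partner of every position j in T = {j | σ j large} has small value
  have hbig : M ≤ 2 * M - 1 - k0 := by omega
  have hpartner : ∀ j : Fin (2 * M), 2 * M - 1 - k0 ≤ (σ j).val →
      (σ j.rev).val < k0 := by
    intro j hj
    have hrev : (j.rev : ℕ) = 2 * M - 1 - j := by
      simp [Fin.rev]; omega
    by_cases hjM : j.val < M
    · obtain ⟨h1, h2⟩ := h ⟨j.val, hjM⟩
      have e1 : (⟨(⟨j.val, hjM⟩ : Fin M).val, by omega⟩ : Fin (2 * M)) = j := by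
        ext; simp
      have e2 : (⟨2 * M - 1 - (⟨j.val, hjM⟩ : Fin M).val, by omega⟩ : Fin (2 * M)) = j.rev := by
        ext; simp [hrev]; omega
      rw [e1] at h1 h2
      rw [e2] at h1 h2
      have := h1 (by omega)
      omega
    · have hjv : 2 * M - 1 - j.val < M := by have := j.isLt; omega
      obtain ⟨h1, h2⟩ := h ⟨2 * M - 1 - j.val, hjv⟩
      have e2 : (⟨2 * M - 1 - (⟨2 * M - 1 - j.val, hjv⟩ : Fin M).val, by omega⟩ : Fin (2 * M)) = j := by
        ext; simp; have := j.isLt; omega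
      have e1 : (⟨(⟨2 * M - 1 - j.val, hjv⟩ : Fin M).val, by omega⟩ : Fin (2 * M)) = j.rev := by
        ext; simp [hrev]; omega
      rw [e1] at h1 h2
      rw [e2] at h1 h2
      have := h2 (by omega)
      omega
  -- counting
  set T := Finset.univ.filter (fun j : Fin (2 * M) => 2 * M - 1 - k0 ≤ (σ j).val) with hT
  set C := Finset.univ.filter (fun j : Fin (2 * M) => (σ j).val < k0) with hC
  have hTC : T.card ≤ C.card := by
    apply Finset.card_le_card_of_injOn (fun j => j.rev)
    · intro j hj
      simp only [hT, Finset.mem_coe, Finset.mem_filter, Finset.mem_univ, true_and] at hj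
      simp only [hC, Finset.mem_coe, Finset.mem_filter, Finset.mem_univ, true_and]
      exact hpartner j hj
    · intro a _ b _ hab
      exact Fin.rev_injective hab
  have hCcard : C.card = k0 := by
    have : C = (Finset.univ.filter (fun x : Fin (2 * M) => x.val < k0)).image σ.symm := by
      ext j
      simp only [hC, Finset.mem_filter, Finset.mem_univ, true_and, Finset.mem_image]
      constructor
      · intro hj; exact ⟨σ j, hj, by simp⟩
      · rintro ⟨x, hx, rfl⟩; simpa using hx
    rw [this, Finset.card_image_of_injective _ σ.symm.injective,
      card_filter_val_lt _ _ (by omega)]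
  have hTcard : T.card = k0 + 1 := by
    have heq : T = (Finset.univ.filter
        (fun x : Fin (2 * M) => 2 * M - 1 - k0 ≤ x.val)).image σ.symm := by
      ext j
      simp only [hT, Finset.mem_filter, Finset.mem_univ, true_and, Finset.mem_image]
      constructor
      · intro hj; exact ⟨σ j, hj, by simp⟩
      · rintro ⟨x, hx, rfl⟩; simpa using hx
    have hcompl : Finset.univ.filter (fun x : Fin (2 * M) => 2 * M - 1 - k0 ≤ x.val)
        = Finset.univ \ Finset.univ.filter (fun x : Fin (2 * M) => x.val < 2 * M - 1 - k0) := by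
      ext x; simp [not_lt]
    rw [heq, Finset.card_image_of_injective _ σ.symm.injective, hcompl,
      Finset.card_sdiff_of_subset (Finset.filter_subset _ _),
      card_filter_val_lt _ _ (by omega)]
    simp; omega
  omega

/-- For sorted nonnegative SNRs, the strongest-with-weakest pairing also maximizes the
minimum pair rate `min over pairs of log₂(1+t_i+t_j)` over all partitions of the `2M`
users into `M` pairs (pairings represented by permutations as in the sum-rate case). -/
theorem stmt_2 (M : ℕ) (hM : 0 < M) (t : Fin (2 * M) → ℝ) (ht0 : ∀ i, 0 ≤ t i)
    (hsort : ∀ i j : Fin (2 * M), i ≤ j → t j ≤ t i)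
    (σ : Equiv.Perm (Fin (2 * M))) :
    ⨅ m : Fin M, Real.logb 2
        (1 + t (σ ⟨m, by have := m.isLt; omega⟩) + t (σ ⟨2 * M - 1 - m, by have := m.isLt; omega⟩))
      ≤ ⨅ m : Fin M, Real.logb 2
        (1 + t ⟨m, by have := m.isLt; omega⟩ + t ⟨2 * M - 1 - m, by have := m.isLt; omega⟩) := by
  haveI : Nonempty (Fin M) := ⟨⟨0, hM⟩⟩
  -- the minimizer of the RHS summand values
  obtain ⟨k0, -, hk0min⟩ := Finset.exists_min_image Finset.univ
    (fun k : Fin M => t ⟨k, by have := k.isLt; omega⟩ +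
        t ⟨2 * M - 1 - k, by have := k.isLt; omega⟩) ⟨⟨0, hM⟩, Finset.mem_univ _⟩
  obtain ⟨m, hm⟩ := key_pair M hM σ k0.val k0.isLt
  have hsum : t (σ ⟨m, by have := m.isLt; omega⟩) +
      t (σ ⟨2 * M - 1 - m, by have := m.isLt; omega⟩) ≤
      t ⟨k0, by have := k0.isLt; omega⟩ + t ⟨2 * M - 1 - k0, by have := k0.isLt; omega⟩ := by
    rcases hm with ⟨h1, h2⟩ | ⟨h1, h2⟩
    · have a1 := hsort ⟨k0, by have := k0.isLt; omega⟩ _ h1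
      have a2 := hsort ⟨2 * M - 1 - k0, by have := k0.isLt; omega⟩ _ h2
      linarith
    · have a1 := hsort ⟨k0, by have := k0.isLt; omega⟩ _ h1
      have a2 := hsort ⟨2 * M - 1 - k0, by have := k0.isLt; omega⟩ _ h2
      linarith
  refine le_trans (ciInf_le (Set.Finite.bddBelow (Set.finite_range _)) m) (le_ciInf ?_)
  intro k
  have hpos : (0:ℝ) < 1 + t (σ ⟨m, by have := m.isLt; omega⟩) +
      t (σ ⟨2 * M - 1 - m, by have := m.isLt; omega⟩) := by
    have := ht0 (σ ⟨m, by have := m.isLt; omega⟩)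
    have := ht0 (σ ⟨2 * M - 1 - m, by have := m.isLt; omega⟩)
    linarith
  apply Real.logb_le_logb_of_le one_lt_two hpos
  have := hk0min k (Finset.mem_univ _)
  linarith
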